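/- arXiv:2512.11129 — 3 statements merged into one kernel-verified Lean document; each statement's English description precedes it below -/
import Mathlib

section
/- Let Q be an acyclic conjunctive query whose atoms are all binary, such that Q is bound-connected (the bound variables induce a connected query graph and every free variable is adjacent to a bound variable or the query is a single atom). Then the query graph of Q is a tree in which every free variable occurs only at a leaf, and the fractional edge cover number of the set of free variables satisfies: it equals 1 if Q consists of a single atom whose both variables are free, and it equals the number of free variables otherwise. -/
open scoped Classical

/-- Fractional edge cover number of a vertex set `F` in a simple graph `G`:
the infimum of total weights of nonnegative edge weightings such that every
vertex of `F` has incident weight at least 1. -/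
noncomputable def rhoStar {V : Type*} [Fintype V] (G : SimpleGraph V) (F : Finset V) : ℝ :=
  sInf {c : ℝ | ∃ w : Sym2 V → ℝ, (∀ e, 0 ≤ w e) ∧
    (∀ v ∈ F, 1 ≤ ∑ e ∈ G.edgeFinset.filter (fun e => v ∈ e), w e) ∧
    c = ∑ e ∈ G.edgeFinset, w e}

/-- For an acyclic, bound-connected conjunctive query with binary atoms
(query graph `G`, free variables `free`, every variable occurring in some atom),
the query graph is a tree in which every free variable is a leaf, and
`ρ*(free) = 1` if the query is a single atom with both variables free,
and `ρ*(free) = |free|` otherwise. -/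
theorem stmt_0 {V : Type*} [Fintype V] (G : SimpleGraph V) (free : Finset V)
    (hacyc : G.IsAcyclic)
    (hvars : ∀ v : V, ∃ u : V, G.Adj v u)
    (hbc : ((G.induce {v : V | v ∉ free}).Connected ∧
              ∀ v ∈ free, ∃ u : V, u ∉ free ∧ G.Adj v u) ∨
           G.edgeFinset.card = 1) :
    G.IsTree ∧
    (∀ v ∈ free, G.degree v = 1) ∧
    ((∃ e : Sym2 V, G.edgeFinset = {e} ∧ ∀ v ∈ e, v ∈ free) →
        rhoStar G free = 1) ∧
    (¬ (∃ e : Sym2 V, G.edgeFinset = {e} ∧ ∀ v ∈ e, v ∈ free) →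
        rhoStar G free = (free.card : ℝ)) := by
  classical
  have hpu := SimpleGraph.isAcyclic_iff_path_unique.mp hacyc
  have main : G.Connected ∧ (∀ v ∈ free, ∀ x y : V, G.Adj v x → G.Adj v y → x = y) ∧
      (∀ v ∈ free, ∀ u, G.Adj v u → u ∈ free →
        (∃ e : Sym2 V, G.edgeFinset = {e} ∧ ∀ x ∈ e, x ∈ free)) := by
    rcases hbc with ⟨hconn, hadj⟩ | hcard
    · set S : Set V := {v : V | v ∉ free} with hSdef
      have hreach : ∀ a b : S, G.Reachable a b := fun a b =>
        (hconn a b).map (SimpleGraph.Embedding.induce S).toHom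
      have hrep : ∀ v : V, ∃ u : V, u ∈ S ∧ G.Reachable v u := by
        intro v
        by_cases hv : v ∈ free
        · obtain ⟨u, hu, hadjvu⟩ := hadj v hv
          exact ⟨u, hu, hadjvu.reachable⟩
        · exact ⟨v, hv, SimpleGraph.Reachable.refl v⟩
      have hgconn : G.Connected := by
        haveI hne : Nonempty V := by
          obtain ⟨⟨x, _⟩⟩ := hconn.nonempty; exact ⟨x⟩
        refine ⟨fun u w => ?_⟩
        obtain ⟨u', hu'S, hru⟩ := hrep u
        obtain ⟨w', hw'S, hrw⟩ := hrep w
        exact hru.trans ((hreach ⟨u', hu'S⟩ ⟨w', hw'S⟩).trans hrw.symm)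
      have huniq : ∀ v ∈ free, ∀ x y : V, G.Adj v x → G.Adj v y → x = y := by
        intro v hv x y hvx hvy
        by_contra hxy
        obtain ⟨u, huS, hvu⟩ := hadj v hv
        have key : ∀ z : V, G.Adj v z → z ≠ u → False := by
          intro z hvz hzu
          -- walk from u to z avoiding v
          have hw2 : ∃ q : G.Walk u z, v ∉ q.support := by
            by_cases hz : z ∈ free
            · obtain ⟨y, hyS, hzy⟩ := hadj z hz
              obtain ⟨w0⟩ := hconn ⟨u, huS⟩ ⟨y, hyS⟩
              refine ⟨(w0.map (SimpleGraph.Embedding.induce S).toHom).concat hzy.symm, ?_⟩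
              intro hvmem
              have hsc := SimpleGraph.Walk.support_concat (w0.map (SimpleGraph.Embedding.induce S).toHom) hzy.symm
              replace hvmem : v ∈ (w0.map (SimpleGraph.Embedding.induce S).toHom).support ++ [z] := by
                rw [← hsc]; exact hvmem
              rw [List.mem_append, List.mem_singleton] at hvmem
              rcases hvmem with hvmem | heq
              · have hsm := SimpleGraph.Walk.support_map (SimpleGraph.Embedding.induce S).toHom w0
                rw [hsm, List.mem_map] at hvmem
                obtain ⟨⟨a, haS⟩, _, hfa⟩ := hvmem
                have : a = v := hfa
                exact haS (this ▸ hv)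
              · exact hvz.ne heq
            · obtain ⟨w0⟩ := hconn ⟨u, huS⟩ ⟨z, hz⟩
              refine ⟨w0.map (SimpleGraph.Embedding.induce S).toHom, ?_⟩
              intro hvmem
              have hsm := SimpleGraph.Walk.support_map (SimpleGraph.Embedding.induce S).toHom w0
              replace hvmem : v ∈ w0.support.map (SimpleGraph.Embedding.induce (G := G) S).toHom := by
                rw [← hsm]; exact hvmem
              rw [List.mem_map] at hvmem
              obtain ⟨⟨a, haS⟩, _, hfa⟩ := hvmem
              have : a = v := hfa
              exact haS (this ▸ hv)
          obtain ⟨q, hq⟩ := hw2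
          have hp1 : (SimpleGraph.Walk.cons hvu.symm
              (SimpleGraph.Walk.cons hvz SimpleGraph.Walk.nil)).IsPath := by
            simp [SimpleGraph.Walk.isPath_def]
            exact ⟨⟨hvu.ne', hzu.symm⟩, hvz.ne⟩
          have heq := hpu ⟨_, hp1⟩ q.toPath
          have hvmem : v ∈ (⟨_, hp1⟩ : G.Path u z).1.support := by
            simp
          rw [heq] at hvmem
          exact hq (q.support_toPath_subset hvmem)
        rcases eq_or_ne x u with rfl | hxu
        · exact key y hvy (fun h => hxy h.symm)
        · exact key x hvx hxu
      refine ⟨hgconn, huniq, ?_⟩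
      intro v hv u hvu huf
      obtain ⟨u', hu'S, hvu'⟩ := hadj v hv
      exact absurd (huniq v hv u u' hvu hvu' ▸ huf) hu'S
    · obtain ⟨e, he⟩ := Finset.card_eq_one.mp hcard
      revert he
      induction e using Sym2.ind with
      | _ a b =>
        intro he
        have hab : G.Adj a b := by
          rw [← SimpleGraph.mem_edgeSet, ← SimpleGraph.mem_edgeFinset, he]
          exact Finset.mem_singleton_self _
        have hmem : ∀ v u : V, G.Adj v u → (s(v, u) : Sym2 V) = s(a, b) := by
          intro v u h
          have : (s(v, u) : Sym2 V) ∈ G.edgeFinset := SimpleGraph.mem_edgeFinset.mpr (G.mem_edgeSet.mpr h)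
          rwa [he, Finset.mem_singleton] at this
        have hin : ∀ v : V, v = a ∨ v = b := by
          intro v
          obtain ⟨u, hu⟩ := hvars v
          have := hmem v u hu
          rw [Sym2.eq_iff] at this
          rcases this with ⟨h1, _⟩ | ⟨h1, _⟩
          · exact Or.inl h1
          · exact Or.inr h1
        have hconn : G.Connected := by
          haveI : Nonempty V := ⟨a⟩
          refine ⟨fun u w => ?_⟩
          rcases hin u with rfl | rfl <;> rcases hin w with rfl | rfl
          · exact SimpleGraph.Reachable.refl _
          · exact hab.reachable
          · exact hab.symm.reachable
          · exact SimpleGraph.Reachable.refl _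
        have huniq : ∀ v ∈ free, ∀ x y : V, G.Adj v x → G.Adj v y → x = y := by
          intro v _ x y hx hy
          have h := (hmem v x hx).trans (hmem v y hy).symm
          exact (Sym2.congr_right).mp h
        refine ⟨hconn, huniq, ?_⟩
        intro v hv u hvu huf
        refine ⟨s(v, u), by rw [he, hmem v u hvu], ?_⟩
        intro x hx
        rw [Sym2.mem_iff] at hx
        rcases hx with rfl | rfl
        · exact hv
        · exact huf
  obtain ⟨hconn, huniq, hspec⟩ := main
  set c : V → V := fun v => Classical.choose (hvars v) with hcdef
  have hc : ∀ v : V, G.Adj v (c v) := fun v => Classical.choose_spec (hvars v)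
  have hdeg : ∀ v ∈ free, G.degree v = 1 := by
    intro v hv
    have hnbF : G.neighborFinset v = {c v} := by
      ext x
      simp only [SimpleGraph.mem_neighborFinset, Finset.mem_singleton]
      exact ⟨fun h => huniq v hv x (c v) h (hc v), fun h => h ▸ hc v⟩
    rw [← SimpleGraph.card_neighborFinset_eq_degree, hnbF, Finset.card_singleton]
  refine ⟨⟨hconn, hacyc⟩, hdeg, ?_, ?_⟩
  · -- single all-free edge case
    rintro ⟨e, he, hfe⟩
    revert he hfe
    induction e using Sym2.ind with
    | _ a b =>
      intro he hfe
      have hab : G.Adj a b := by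
        rw [← SimpleGraph.mem_edgeSet, ← SimpleGraph.mem_edgeFinset, he]
        exact Finset.mem_singleton_self _
      have ha : a ∈ free := hfe a (Sym2.mem_mk_left a b)
      have hallin : ∀ v : V, v ∈ (s(a, b) : Sym2 V) := by
        intro v
        obtain ⟨u, hu⟩ := hvars v
        have h1 : (s(v, u) : Sym2 V) ∈ G.edgeFinset := SimpleGraph.mem_edgeFinset.mpr (G.mem_edgeSet.mpr hu)
        rw [he, Finset.mem_singleton] at h1
        rw [← h1]
        exact Sym2.mem_mk_left v u
      have hfil : ∀ v : V, G.edgeFinset.filter (fun e => v ∈ e) = {s(a, b)} := by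
        intro v
        rw [he, Finset.filter_singleton, if_pos (hallin v)]
      have hmem1 : (1 : ℝ) ∈ {cc : ℝ | ∃ w : Sym2 V → ℝ, (∀ e, 0 ≤ w e) ∧
          (∀ v ∈ free, 1 ≤ ∑ e ∈ G.edgeFinset.filter (fun e => v ∈ e), w e) ∧
          cc = ∑ e ∈ G.edgeFinset, w e} := by
        refine ⟨fun _ => 1, fun _ => zero_le_one, fun v _ => ?_, ?_⟩
        · rw [hfil v, Finset.sum_singleton]
        · rw [he, Finset.sum_singleton]
      have hlb : ∀ cc ∈ {cc : ℝ | ∃ w : Sym2 V → ℝ, (∀ e, 0 ≤ w e) ∧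
          (∀ v ∈ free, 1 ≤ ∑ e ∈ G.edgeFinset.filter (fun e => v ∈ e), w e) ∧
          cc = ∑ e ∈ G.edgeFinset, w e}, (1 : ℝ) ≤ cc := by
        rintro cc ⟨w, _, hwc, rfl⟩
        have := hwc a ha
        rw [hfil a, Finset.sum_singleton] at this
        rw [he, Finset.sum_singleton]
        exact this
      exact le_antisymm (csInf_le ⟨1, hlb⟩ hmem1) (le_csInf ⟨1, hmem1⟩ hlb)
  · -- general case
    intro hnsp
    have hnf : ∀ v ∈ free, c v ∉ free := fun v hv hcf =>
      hnsp (hspec v hv (c v) (hc v) hcf)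
    have hfil : ∀ v ∈ free, G.edgeFinset.filter (fun e => v ∈ e) = {s(v, c v)} := by
      intro v hv
      ext e
      induction e using Sym2.ind with
      | _ x y =>
        simp only [Finset.mem_filter, Finset.mem_singleton, SimpleGraph.mem_edgeFinset,
          Sym2.mem_iff]
        constructor
        · rintro ⟨hxy, rfl | rfl⟩
          · rw [huniq v hv y (c v) hxy (hc v)]
          · rw [huniq v hv x (c v) hxy.symm (hc v), Sym2.eq_swap]
        · intro h
          rw [Sym2.eq_iff] at h
          rcases h with ⟨h1, h2⟩ | ⟨h1, h2⟩
          · exact ⟨by rw [h1, h2]; exact hc v, Or.inl h1.symm⟩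
          · exact ⟨by rw [h1, h2]; exact (hc v).symm, Or.inr h2.symm⟩
    have hinj : Set.InjOn (fun v => (s(v, c v) : Sym2 V)) ↑free := by
      intro x hx y hy hxy
      simp only at hxy
      have hmy : y ∈ (s(x, c x) : Sym2 V) := by
        rw [hxy]; exact Sym2.mem_mk_left y (c y)
      rw [Sym2.mem_iff] at hmy
      rcases hmy with rfl | rfl
      · rfl
      · exact absurd hy (hnf x hx)
    set E : Finset (Sym2 V) := free.image (fun v => s(v, c v)) with hEdef
    have hEsub : E ⊆ G.edgeFinset := by
      intro e he
      rw [hEdef, Finset.mem_image] at he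
      obtain ⟨v, _, rfl⟩ := he
      exact SimpleGraph.mem_edgeFinset.mpr (G.mem_edgeSet.mpr (hc v))
    have hEcard : E.card = free.card := Finset.card_image_of_injOn hinj
    have hmemN : ((free.card : ℝ)) ∈ {cc : ℝ | ∃ w : Sym2 V → ℝ, (∀ e, 0 ≤ w e) ∧
        (∀ v ∈ free, 1 ≤ ∑ e ∈ G.edgeFinset.filter (fun e => v ∈ e), w e) ∧
        cc = ∑ e ∈ G.edgeFinset, w e} := by
      refine ⟨fun e => if e ∈ E then 1 else 0, fun e => by positivity, fun v hv => ?_, ?_⟩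
      · rw [hfil v hv, Finset.sum_singleton,
          if_pos (Finset.mem_image_of_mem (fun v => (s(v, c v) : Sym2 V)) hv)]
      · rw [Finset.sum_ite_mem, Finset.inter_eq_right.mpr hEsub, Finset.sum_const,
          nsmul_eq_mul, mul_one, hEcard]
    have hlb : ∀ cc ∈ {cc : ℝ | ∃ w : Sym2 V → ℝ, (∀ e, 0 ≤ w e) ∧
        (∀ v ∈ free, 1 ≤ ∑ e ∈ G.edgeFinset.filter (fun e => v ∈ e), w e) ∧
        cc = ∑ e ∈ G.edgeFinset, w e}, ((free.card : ℝ)) ≤ cc := by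
      rintro cc ⟨w, hw0, hwc, rfl⟩
      have h1 : ∀ v ∈ free, 1 ≤ w (s(v, c v)) := by
        intro v hv
        have := hwc v hv
        rwa [hfil v hv, Finset.sum_singleton] at this
      calc (free.card : ℝ) = ∑ _v ∈ free, (1 : ℝ) := by simp
        _ ≤ ∑ v ∈ free, w (s(v, c v)) := Finset.sum_le_sum h1
        _ = ∑ e ∈ E, w e := (Finset.sum_image (fun x hx y hy h =>
              hinj (Finset.mem_coe.mpr hx) (Finset.mem_coe.mpr hy) h)).symm
        _ ≤ ∑ e ∈ G.edgeFinset, w e :=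
              Finset.sum_le_sum_of_subset_of_nonneg hEsub (fun e _ _ => hw0 e)
    exact le_antisymm (csInf_le ⟨(free.card : ℝ), hlb⟩ hmemN) (le_csInf ⟨_, hmemN⟩ hlb)
end

section
/- Let Q be an acyclic CRPQ (query graph is a forest of binary atoms without self-loops or parallel edges) and Q' its k-expansion for k ≥ 2, obtained by replacing each atom R(X,Y) by a path of k fresh binary atoms through k−1 fresh bound variables. If Q is bound-connected with query tree T and free-variable set F, then: rho*_{Q'}(F) = |F|, even when Q consists of a single atom with both endpoints free (in which case rho*_Q(F) = 1 but rho*_{Q'}(F) = 2). -/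
open scoped Classical

/-- Fractional edge cover number of a variable set `S` using a set of directed
binary atoms: minimum total weight of nonnegative atom weights such that each
variable of `S` has incident weight at least 1. -/
noncomputable def drhoStar {α : Type*} (atoms : Finset (α × α)) (S : Finset α) : ℝ :=
  sInf {c : ℝ | ∃ w : α × α → ℝ, (∀ a, 0 ≤ w a) ∧
    (∀ v ∈ S, 1 ≤ ∑ a ∈ atoms.filter (fun a => a.1 = v ∨ a.2 = v), w a) ∧
    c = ∑ a ∈ atoms, w a}

/-- The (undirected simple) query graph of a set of binary atoms. -/
def qgraph {V : Type*} (atoms : Finset (V × V)) : SimpleGraph V where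
  Adj u v := u ≠ v ∧ ((u, v) ∈ atoms ∨ (v, u) ∈ atoms)
  symm := ⟨fun _ _ h => ⟨Ne.symm h.1, Or.symm h.2⟩⟩
  loopless := ⟨fun _ h => h.1 rfl⟩

/-- The `k`-expansion of a set of binary atoms: each atom `(X, Y)` is replaced by
a path of `k` fresh atoms through `k−1` fresh bound variables
`(e,0), …, (e,k−2)`. -/
def kexpand {V : Type*} [DecidableEq V] (atoms : Finset (V × V)) (k : ℕ) :
    Finset ((V ⊕ ((V × V) × ℕ)) × (V ⊕ ((V × V) × ℕ))) :=
  atoms.biUnion (fun e =>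
    insert (Sum.inl e.1, Sum.inr (e, 0))
      (insert (Sum.inr (e, k - 2), Sum.inl e.2)
        ((Finset.range (k - 2)).image
          (fun i => (Sum.inr (e, i), Sum.inr (e, i + 1))))))

/-- No expansion atom has both endpoints of the form `Sum.inl`. -/
lemma kexpand_not_both_inl {V : Type*} [DecidableEq V] (atoms : Finset (V × V)) (k : ℕ)
    (a : (V ⊕ ((V × V) × ℕ)) × (V ⊕ ((V × V) × ℕ))) (ha : a ∈ kexpand atoms k)
    (x y : V) : ¬ (a.1 = Sum.inl x ∧ a.2 = Sum.inl y) := by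
  rintro ⟨h1, h2⟩
  simp only [kexpand, Finset.mem_biUnion, Finset.mem_insert, Finset.mem_image,
    Finset.mem_range] at ha
  obtain ⟨e, -, h | h | ⟨i, -, h⟩⟩ := ha <;> subst h <;> simp_all

lemma drho_eq {α : Type*} (atoms : Finset (α × α)) (S : Finset α) (r : ℝ)
    (hmem : r ∈ {c : ℝ | ∃ w : α × α → ℝ, (∀ a, 0 ≤ w a) ∧
      (∀ v ∈ S, 1 ≤ ∑ a ∈ atoms.filter (fun a => a.1 = v ∨ a.2 = v), w a) ∧
      c = ∑ a ∈ atoms, w a})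
    (hlb : ∀ c ∈ {c : ℝ | ∃ w : α × α → ℝ, (∀ a, 0 ≤ w a) ∧
      (∀ v ∈ S, 1 ≤ ∑ a ∈ atoms.filter (fun a => a.1 = v ∨ a.2 = v), w a) ∧
      c = ∑ a ∈ atoms, w a}, r ≤ c) :
    drhoStar atoms S = r :=
  le_antisymm (csInf_le ⟨r, hlb⟩ hmem) (le_csInf ⟨r, hmem⟩ hlb)


/-- Let `Q` be an acyclic CRPQ (query graph a forest of binary
atoms, no self-loops, no parallel edges) that is bound-connected, with free
variables `free`, and let `Q'` be its `k`-expansion for `k ≥ 2`. Then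
`ρ*_{Q'}(free) = |free|`; this holds even when `Q` is a single atom with both
endpoints free, in which case `ρ*_Q(free) = 1` but `ρ*_{Q'}(free) = 2`. -/
theorem stmt_10 {V : Type*} [Fintype V] [DecidableEq V]
    (atoms : Finset (V × V)) (free : Finset V) (k : ℕ) (hk : 2 ≤ k)
    (hself : ∀ x : V, (x, x) ∉ atoms)
    (hpar : ∀ x y : V, (x, y) ∈ atoms → (y, x) ∉ atoms)
    (hacyc : (qgraph atoms).IsAcyclic)
    (hvars : ∀ v : V, ∃ u : V, (qgraph atoms).Adj v u)
    (hbc : (((qgraph atoms).induce {v : V | v ∉ free}).Connected ∧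
              ∀ v ∈ free, ∃ u : V, u ∉ free ∧ (qgraph atoms).Adj v u) ∨
           atoms.card = 1) :
    drhoStar (kexpand atoms k) (free.image Sum.inl) = (free.card : ℝ) ∧
    ((∃ a : V × V, atoms = {a} ∧ a.1 ∈ free ∧ a.2 ∈ free) →
      drhoStar atoms free = 1 ∧
      drhoStar (kexpand atoms k) (free.image Sum.inl) = 2) := by
  clear hpar hacyc hbc
  set A' := kexpand atoms k with hA'
  set F := free.image (Sum.inl : V → V ⊕ ((V × V) × ℕ)) with hF
  -- every vertex lies on some atom
  have hex : ∀ v : V, ∃ e ∈ atoms, e.1 = v ∨ e.2 = v := by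
    intro v
    obtain ⟨u, hu⟩ := hvars v
    rcases hu.2 with h | h
    · exact ⟨(v, u), h, Or.inl rfl⟩
    · exact ⟨(u, v), h, Or.inr rfl⟩
  choose e he1 he2 using hex
  -- designated outer expansion atom for each vertex
  set g : V → (V ⊕ ((V × V) × ℕ)) × (V ⊕ ((V × V) × ℕ)) :=
    fun v => if (e v).1 = v then (Sum.inl v, Sum.inr (e v, 0))
             else (Sum.inr (e v, k - 2), Sum.inl v) with hg
  have hgmem : ∀ v : V, g v ∈ A' := by
    intro v
    by_cases h : (e v).1 = v
    · have : g v = (Sum.inl (e v).1, Sum.inr (e v, 0)) := by simp [hg, h]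
      rw [this, hA', kexpand]
      exact Finset.mem_biUnion.mpr ⟨e v, he1 v, Finset.mem_insert_self _ _⟩
    · have h2 : (e v).2 = v := (he2 v).resolve_left h
      have : g v = (Sum.inr (e v, k - 2), Sum.inl (e v).2) := by simp [hg, h, h2]
      rw [this, hA', kexpand]
      exact Finset.mem_biUnion.mpr ⟨e v, he1 v,
        Finset.mem_insert_of_mem (Finset.mem_insert_self _ _)⟩
  have hginc : ∀ v : V, (g v).1 = Sum.inl v ∨ (g v).2 = Sum.inl v := by
    intro v
    by_cases h : (e v).1 = v
    · left; simp [hg, h]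
    · right; simp [hg, h]
  have hginj : ∀ v v' : V, g v = g v' → v = v' := by
    intro v v' hvv'
    by_cases h : (e v).1 = v <;> by_cases h' : (e v').1 = v' <;>
      simp [hg, h, h', Prod.ext_iff] at hvv' <;> tauto
  -- the membership witness weight
  set w : ((V ⊕ ((V × V) × ℕ)) × (V ⊕ ((V × V) × ℕ))) → ℝ :=
    fun a => ∑ v ∈ free, if g v = a then (1 : ℝ) else 0 with hw
  have hw0 : ∀ a, 0 ≤ w a := fun a =>
    Finset.sum_nonneg fun v _ => by positivity
  have hwcov : ∀ u ∈ F, 1 ≤ ∑ a ∈ A'.filter (fun a => a.1 = u ∨ a.2 = u), w a := by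
    intro u hu
    obtain ⟨x, hx, rfl⟩ := Finset.mem_image.mp hu
    have hgx : g x ∈ A'.filter (fun a => a.1 = Sum.inl x ∨ a.2 = Sum.inl x) :=
      Finset.mem_filter.mpr ⟨hgmem x, hginc x⟩
    have h1 : (1 : ℝ) ≤ w (g x) := by
      have := Finset.single_le_sum (f := fun v => if g v = g x then (1 : ℝ) else 0)
        (fun v _ => by positivity) hx
      simpa [hw] using this
    exact h1.trans (Finset.single_le_sum (fun a _ => hw0 a) hgx)
  have hwtot : ∑ a ∈ A', w a = (free.card : ℝ) := by
    rw [hw]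
    rw [Finset.sum_comm]
    have : ∀ v ∈ free, (∑ a ∈ A', if g v = a then (1 : ℝ) else 0) = 1 := by
      intro v hv
      rw [Finset.sum_ite_eq A' (g v) (fun _ => (1 : ℝ))]
      simp [hgmem v]
    rw [Finset.sum_congr rfl this]
    simp
  have hmain : drhoStar A' F = (free.card : ℝ) := by
    apply drho_eq
    · refine ⟨w, hw0, ?_, hwtot.symm⟩
      intro v hv
      convert hwcov v hv using 3
    · rintro c ⟨w', hw'0, hw'cov, rfl⟩
      have hw'cov2 : ∀ v ∈ F, 1 ≤ ∑ a ∈ A'.filter (fun a => a.1 = v ∨ a.2 = v), w' a := by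
        intro v hv; convert hw'cov v hv using 3
      have hFcard : (F.card : ℝ) = (free.card : ℝ) := by
        rw [hF, Finset.card_image_of_injective _ Sum.inl_injective]
      calc (free.card : ℝ) = ∑ v ∈ F, (1 : ℝ) := by rw [Finset.sum_const]; simp [← hFcard]
        _ ≤ ∑ v ∈ F, ∑ a ∈ A'.filter (fun a => a.1 = v ∨ a.2 = v), w' a :=
            Finset.sum_le_sum hw'cov2
        _ = ∑ v ∈ F, ∑ a ∈ A', if a.1 = v ∨ a.2 = v then w' a else 0 := by
            simp [Finset.sum_filter]
        _ = ∑ a ∈ A', ∑ v ∈ F, if a.1 = v ∨ a.2 = v then w' a else 0 := Finset.sum_comm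
        _ ≤ ∑ a ∈ A', w' a := by
            refine Finset.sum_le_sum fun a ha => ?_
            rw [← Finset.sum_filter, Finset.sum_const]
            have hcard : (F.filter (fun v => a.1 = v ∨ a.2 = v)).card ≤ 1 := by
              refine Finset.card_le_one.mpr fun v hv v' hv' => ?_
              obtain ⟨hvF, hv⟩ := Finset.mem_filter.mp hv
              obtain ⟨hv'F, hv'⟩ := Finset.mem_filter.mp hv'
              obtain ⟨x, -, rfl⟩ := Finset.mem_image.mp hvF
              obtain ⟨y, -, rfl⟩ := Finset.mem_image.mp hv'F
              rcases hv with h1 | h1 <;> rcases hv' with h2 | h2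
              · exact h1.symm.trans h2
              · exact absurd ⟨h1, h2⟩ (kexpand_not_both_inl atoms k a ha x y)
              · exact absurd ⟨h2, h1⟩ (kexpand_not_both_inl atoms k a ha y x)
              · exact h1.symm.trans h2
            calc (F.filter (fun v => a.1 = v ∨ a.2 = v)).card • w' a
                ≤ 1 • w' a := smul_le_smul_of_nonneg_right hcard (hw'0 a)
              _ = w' a := one_smul _ _
  refine ⟨hmain, ?_⟩
  rintro ⟨a, rfl, ha1, ha2⟩
  -- single atom case
  have hane : a.1 ≠ a.2 := fun h => hself a.1 (Finset.mem_singleton.mpr (Prod.ext rfl h))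
  have hfv : ∀ v ∈ free, a.1 = v ∨ a.2 = v := by
    intro v hv
    have h := he2 v
    rw [Finset.mem_singleton.mp (he1 v)] at h
    tauto
  have hfree : free = {a.1, a.2} := by
    apply Finset.Subset.antisymm
    · intro v hv
      rcases hfv v hv with h | h <;> simp [← h]
    · intro v hv
      rcases Finset.mem_insert.mp hv with h | h
      · rwa [h]
      · rw [Finset.mem_singleton.mp h]; exact ha2
  have hcard2 : free.card = 2 := by
    rw [hfree, Finset.card_insert_of_notMem (by simp [hane]), Finset.card_singleton]
  constructor
  · -- drhoStar {a} free = 1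
    apply drho_eq
    · refine ⟨fun _ => 1, fun _ => zero_le_one, ?_, by simp⟩
      intro v hv
      have : (1 : ℝ) ≤ ∑ _b ∈ ({a} : Finset (V × V)).filter (fun b => b.1 = v ∨ b.2 = v), (1 : ℝ) :=
        Finset.single_le_sum (f := fun _ => (1 : ℝ)) (fun _ _ => zero_le_one)
          (Finset.mem_filter.mpr ⟨Finset.mem_singleton_self a, hfv v hv⟩)
      convert this using 3
    · rintro c ⟨w', hw'0, hw'cov, rfl⟩
      have h1 : (1 : ℝ) ≤ ∑ b ∈ ({a} : Finset (V × V)).filter (fun b => b.1 = a.1 ∨ b.2 = a.1), w' b := by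
        convert hw'cov a.1 ha1 using 3
      calc (1 : ℝ) ≤ ∑ b ∈ ({a} : Finset (V × V)).filter (fun b => b.1 = a.1 ∨ b.2 = a.1), w' b := h1
        _ ≤ ∑ b ∈ ({a} : Finset (V × V)), w' b :=
            Finset.sum_le_sum_of_subset_of_nonneg (Finset.filter_subset _ _)
              (fun b _ _ => hw'0 b)
  · rw [hmain, hcard2]; norm_num
end

section
/- Let Q be a conjunctive query and Q' a subquery (subset of atoms) such that every atom of Q whose variables are all contained in vars(Q') already belongs to Q'. If additionally for every pair of distinct free variables X, Y of Q' no atom of Q \ Q' contains both X and Y, then rho*_Q(free(Q')) = rho*_{Q'}(free(Q')). -/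
open scoped Classical

/-- Fractional edge cover number of a variable set `S` using a set of hyperedges
(atoms of a conjunctive query of arbitrary arities). -/
noncomputable def hrhoStar {V : Type*} (atoms : Finset (Finset V)) (S : Finset V) : ℝ :=
  sInf {c : ℝ | ∃ w : Finset V → ℝ, (∀ a, 0 ≤ w a) ∧
    (∀ v ∈ S, 1 ≤ ∑ a ∈ atoms.filter (fun a => v ∈ a), w a) ∧
    c = ∑ a ∈ atoms, w a}

/-- Let `Q` be a conjunctive query (atom set `atoms`) and `Q'` a
subquery (atom set `atoms' ⊆ atoms`, free variables `free'`) such that every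
atom of `Q` whose variables are all contained in `vars(Q')` already belongs to
`Q'`. If additionally no atom of `Q \ Q'` contains two distinct free variables
of `Q'`, then `ρ*_Q(free(Q')) = ρ*_{Q'}(free(Q'))`. -/
theorem stmt_15 {V : Type*} [DecidableEq V]
    (atoms atoms' : Finset (Finset V)) (free' : Finset V)
    (hsub : atoms' ⊆ atoms)
    (hfree : free' ⊆ atoms'.biUnion id)
    (hclosed : ∀ a ∈ atoms, a ⊆ atoms'.biUnion id → a ∈ atoms')
    (hnoshare : ∀ X ∈ free', ∀ Y ∈ free', X ≠ Y →
        ∀ a ∈ atoms, a ∉ atoms' → ¬ (X ∈ a ∧ Y ∈ a)) :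
    hrhoStar atoms free' = hrhoStar atoms' free' := by
  classical
  -- abbreviate the two sets
  set S : Set ℝ := {c : ℝ | ∃ w : Finset V → ℝ, (∀ a, 0 ≤ w a) ∧
    (∀ v ∈ free', 1 ≤ ∑ a ∈ atoms.filter (fun a => v ∈ a), w a) ∧
    c = ∑ a ∈ atoms, w a} with hS
  set S' : Set ℝ := {c : ℝ | ∃ w : Finset V → ℝ, (∀ a, 0 ≤ w a) ∧
    (∀ v ∈ free', 1 ≤ ∑ a ∈ atoms'.filter (fun a => v ∈ a), w a) ∧
    c = ∑ a ∈ atoms', w a} with hS'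
  have hbddS : BddBelow S := by
    refine ⟨0, ?_⟩
    rintro c ⟨w, hw, _, rfl⟩
    exact Finset.sum_nonneg fun a _ => hw a
  have hbddS' : BddBelow S' := by
    refine ⟨0, ?_⟩
    rintro c ⟨w, hw, _, rfl⟩
    exact Finset.sum_nonneg fun a _ => hw a
  -- existence of a witness atom of atoms' containing each free variable
  have hex : ∀ v ∈ free', ∃ b ∈ atoms', v ∈ b := by
    intro v hv
    have := hfree hv
    simpa using Finset.mem_biUnion.mp this
  have hneS' : S'.Nonempty := by
    refine ⟨∑ a ∈ atoms', (1 : ℝ), fun _ => 1, fun _ => zero_le_one, ?_, rfl⟩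
    intro v hv
    obtain ⟨b, hb, hvb⟩ := hex v hv
    have hmem : b ∈ atoms'.filter (fun a => v ∈ a) := Finset.mem_filter.mpr ⟨hb, hvb⟩
    exact Finset.single_le_sum (fun i _ => zero_le_one) hmem
  have hneS : S.Nonempty := by
    refine ⟨∑ a ∈ atoms, (1 : ℝ), fun _ => 1, fun _ => zero_le_one, ?_, rfl⟩
    intro v hv
    obtain ⟨b, hb, hvb⟩ := hex v hv
    have hmem : b ∈ atoms.filter (fun a => v ∈ a) := Finset.mem_filter.mpr ⟨hsub hb, hvb⟩
    exact Finset.single_le_sum (fun i _ => zero_le_one) hmem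
  have hset : ∀ (A : Finset (Finset V)), hrhoStar A free' = sInf {c : ℝ |
      ∃ w : Finset V → ℝ, (∀ a, 0 ≤ w a) ∧
      (∀ v ∈ free', 1 ≤ ∑ a ∈ A.filter (fun a => v ∈ a), w a) ∧
      c = ∑ a ∈ A, w a} := by
    intro A
    unfold hrhoStar
    congr!
  rw [hset atoms, hset atoms', ← hS, ← hS']
  apply le_antisymm
  · -- sInf S ≤ sInf S' : extend a cover of atoms' by zero
    refine le_csInf hneS' ?_
    rintro c ⟨w, hw, hcov, rfl⟩
    apply csInf_le hbddS
    refine ⟨fun b => if b ∈ atoms' then w b else 0,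
      fun a => by by_cases h : a ∈ atoms' <;> simp [h, hw a], ?_, ?_⟩
    · intro v hv
      have := hcov v hv
      calc (1 : ℝ) ≤ ∑ a ∈ atoms'.filter (fun a => v ∈ a), w a := this
        _ = ∑ a ∈ atoms.filter (fun a => v ∈ a), (if a ∈ atoms' then w a else 0) := by
            rw [Finset.sum_ite_mem]
            congr 1
            ext b
            simp only [Finset.mem_filter, Finset.mem_inter]
            constructor
            · rintro ⟨h1, h2⟩
              exact ⟨⟨hsub h1, h2⟩, h1⟩
            · rintro ⟨⟨_, h2⟩, h3⟩
              exact ⟨h3, h2⟩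
    · rw [Finset.sum_ite_mem, Finset.inter_eq_right.mpr hsub]
  · -- sInf S' ≤ sInf S : reroute weights
    refine le_csInf hneS ?_
    rintro c ⟨w, hw, hcov, rfl⟩
    -- choice of covering atom for each free variable
    set e : V → Finset V := fun v => if h : ∃ b ∈ atoms', v ∈ b then h.choose else ∅ with he'
    have heMem : ∀ v ∈ free', e v ∈ atoms' ∧ v ∈ e v := by
      intro v hv
      have h := hex v hv
      simp only [he', dif_pos h]
      exact ⟨h.choose_spec.1, h.choose_spec.2⟩
    -- each bad atom contains at most one free variable
    have hsingle : ∀ a ∈ atoms, a ∉ atoms' → ∀ x ∈ a ∩ free', ∀ y ∈ a ∩ free', x = y := by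
      intro a ha ha' x hx y hy
      rw [Finset.mem_inter] at hx hy
      by_contra hxy
      exact hnoshare x hx.2 y hy.2 hxy a ha ha' ⟨hx.1, hy.1⟩
    set t : Finset V → Finset V :=
      fun a => if h : (a ∩ free').Nonempty then e h.choose else ∅ with ht'
    have ht : ∀ a ∈ atoms, a ∉ atoms' → ∀ v ∈ free', v ∈ a → t a = e v := by
      intro a ha ha' v hv hva
      have hne : (a ∩ free').Nonempty := ⟨v, Finset.mem_inter.mpr ⟨hva, hv⟩⟩
      have := hsingle a ha ha' hne.choose hne.choose_spec v (Finset.mem_inter.mpr ⟨hva, hv⟩)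
      simp only [ht', dif_pos hne, this]
    set bad : Finset (Finset V) := atoms \ atoms' with hbad
    set T : Finset V → ℝ :=
      fun b => ∑ a ∈ bad.filter (fun a => (a ∩ free').Nonempty ∧ t a = b), w a with hT
    have hTnn : ∀ b, 0 ≤ T b := fun b => Finset.sum_nonneg fun a _ => hw a
    set w' : Finset V → ℝ := fun b => w b + T b with hw'
    have hunion : atoms' ∪ bad = atoms := Finset.union_sdiff_of_subset hsub
    have hdisj : Disjoint atoms' bad := Finset.disjoint_sdiff
    have hmem : (∑ b ∈ atoms', w' b) ∈ S' := by
      refine ⟨w', fun b => add_nonneg (hw b) (hTnn b), ?_, rfl⟩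
      -- coverage
      intro v hv
      obtain ⟨hev, hvev⟩ := heMem v hv
      have hsplit : ∑ a ∈ atoms.filter (fun a => v ∈ a), w a =
          ∑ a ∈ atoms'.filter (fun a => v ∈ a), w a +
          ∑ a ∈ bad.filter (fun a => v ∈ a), w a := by
        rw [← Finset.sum_union (Finset.disjoint_filter_filter hdisj), ← Finset.filter_union,
          hunion]
      have h1 : ∑ a ∈ bad.filter (fun a => v ∈ a), w a ≤ T (e v) := by
        apply Finset.sum_le_sum_of_subset_of_nonneg
        · intro a haf
          rw [Finset.mem_filter] at haf ⊢
          obtain ⟨hab, hva⟩ := haf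
          rw [hbad, Finset.mem_sdiff] at hab
          refine ⟨by rw [hbad]; exact Finset.mem_sdiff.mpr hab,
            ⟨v, Finset.mem_inter.mpr ⟨hva, hv⟩⟩, ht a hab.1 hab.2 v hv hva⟩
        · intro a _ _; exact hw a
      have h2 : T (e v) ≤ ∑ b ∈ atoms'.filter (fun b => v ∈ b), T b := by
        apply Finset.single_le_sum (fun b _ => hTnn b)
        exact Finset.mem_filter.mpr ⟨hev, hvev⟩
      calc (1 : ℝ) ≤ ∑ a ∈ atoms.filter (fun a => v ∈ a), w a := hcov v hv
        _ = ∑ a ∈ atoms'.filter (fun a => v ∈ a), w a +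
            ∑ a ∈ bad.filter (fun a => v ∈ a), w a := hsplit
        _ ≤ ∑ a ∈ atoms'.filter (fun a => v ∈ a), w a +
            ∑ b ∈ atoms'.filter (fun b => v ∈ b), T b := by
            exact add_le_add_right (h1.trans h2) _
        _ = ∑ a ∈ atoms'.filter (fun a => v ∈ a), w' a := by
            rw [← Finset.sum_add_distrib]
    refine (csInf_le hbddS' hmem).trans ?_
    -- cost bound
    have hTsum : ∑ b ∈ atoms', T b ≤ ∑ a ∈ bad, w a := by
      rw [hT]
      simp only [Finset.sum_filter]
      rw [Finset.sum_comm]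
      apply Finset.sum_le_sum
      intro a _
      by_cases hp : (a ∩ free').Nonempty
      · simp only [hp, true_and]
        rw [Finset.sum_ite_eq atoms' (t a) (fun _ => w a)]
        split
        · exact le_rfl
        · exact hw a
      · simp [hp, hw a]
    have hws : ∑ b ∈ atoms', w' b = ∑ b ∈ atoms', w b + ∑ b ∈ atoms', T b := by
      rw [hw', Finset.sum_add_distrib]
    rw [hws]
    calc ∑ b ∈ atoms', w b + ∑ b ∈ atoms', T b
        ≤ ∑ b ∈ atoms', w b + ∑ a ∈ bad, w a := add_le_add_right hTsum _
      _ = ∑ a ∈ atoms, w a := by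
          rw [← Finset.sum_union hdisj, hunion]
end
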